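/- arXiv:1407.7092 — 3 statements merged into one kernel-verified Lean document; each statement's English description precedes it below -/
import Mathlib

section
/- For any graph G and any connected graph F with |V(F)| ≥ σ(G), the Ramsey number satisfies R(F,G) ≥ (χ(G)−1)(|V(F)|−1) + σ(G). -/
open SimpleGraph Finset

/-- `F` is contained in `G` as a (not necessarily induced) subgraph. -/
def ContainsCopy {α β : Type*} (F : SimpleGraph α) (G : SimpleGraph β) : Prop :=
  ∃ f : α → β, Function.Injective f ∧ ∀ a b, F.Adj a b → G.Adj (f a) (f b)

/-- Every red/blue coloring of `K_N` yields a red `F` or a blue `G`. -/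
def IsRamsey {α β : Type*} (F : SimpleGraph α) (G : SimpleGraph β) (N : ℕ) : Prop :=
  ∀ R : SimpleGraph (Fin N), ContainsCopy F R ∨ ContainsCopy G Rᶜ

/-- The two color Ramsey number `R(F,G)`. -/
noncomputable def ramseyNumber {α β : Type*} (F : SimpleGraph α) (G : SimpleGraph β) : ℕ :=
  sInf {N | IsRamsey F G N}

/-- The chromatic number of `G` as a natural number. -/
noncomputable def chromNum {V : Type*} (G : SimpleGraph V) : ℕ :=
  sInf {k | G.Colorable k}

/-- `σ(G)`: the minimum size of a color class among proper colorings with `χ(G)` colors. -/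
noncomputable def sigmaG {V : Type*} [Fintype V] (G : SimpleGraph V) : ℕ :=
  sInf {m | ∃ C : G.Coloring (Fin (chromNum G)), ∃ i,
    (Finset.univ.filter (fun v => C v = i)).card = m}

/-- The independence number of `G`. -/
noncomputable def indepNum {V : Type*} [Fintype V] (G : SimpleGraph V) : ℕ :=
  sSup {m | ∃ s : Finset V, s.card = m ∧ ∀ a ∈ s, ∀ b ∈ s, ¬ G.Adj a b}

/-- `f` describes a cycle of length `m` in `R`. -/
def CycleIn {V : Type*} (R : SimpleGraph V) (m : ℕ) (f : ZMod m → V) : Prop :=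
  3 ≤ m ∧ Function.Injective f ∧ ∀ i, R.Adj (f i) (f (i + 1))

/-- `f` describes a longest cycle (of length `m`) in `R`. -/
def LongestCycle {V : Type*} (R : SimpleGraph V) (m : ℕ) (f : ZMod m → V) : Prop :=
  CycleIn R m f ∧ ∀ (m' : ℕ) (g : ZMod m' → V), CycleIn R m' g → m' ≤ m

/-- The `k`-th power of the path on `n` vertices. -/
def pathPower (n k : ℕ) : SimpleGraph (Fin n) :=
  SimpleGraph.fromRel (fun i j => (i : ℕ) < j ∧ (j : ℕ) ≤ i + k)


def BurrCliqueOn {V : Type} (A : V → V → Prop) (k : ℕ) : Prop :=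
  ∃ s : Finset V, k ≤ s.card ∧ ∀ a ∈ s, ∀ b ∈ s, a ≠ b → A a b

lemma burr_cliqueOn_lift {V : Type} (A : V → V → Prop) (s : Finset V) (k : ℕ)
    (h : BurrCliqueOn (fun a b : ↥s => A a.1 b.1) k) :
    ∃ t : Finset V, t ⊆ s ∧ k ≤ t.card ∧ ∀ a ∈ t, ∀ b ∈ t, a ≠ b → A a b := by
  obtain ⟨t, hk, ht⟩ := h
  refine ⟨t.map (Function.Embedding.subtype _), ?_, by simpa using hk, ?_⟩
  · intro x hx
    obtain ⟨y, _, rfl⟩ := Finset.mem_map.mp hx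
    exact y.2
  · intro a ha b hb hab
    obtain ⟨a', ha', rfl⟩ := Finset.mem_map.mp ha
    obtain ⟨b', hb', rfl⟩ := Finset.mem_map.mp hb
    exact ht a' ha' b' hb' (fun he => hab (congrArg _ he))

lemma burr_ramsey_aux : ∀ (n i j : ℕ), i + j ≤ n → ∃ N : ℕ,
    ∀ (V : Type) [Fintype V] (A : V → V → Prop), Symmetric A → N ≤ Fintype.card V →
      BurrCliqueOn A i ∨ BurrCliqueOn (fun a b => ¬ A a b) j := by
  intro n
  induction n with
  | zero =>
    intro i j hij
    refine ⟨0, fun V _ A _ _ => Or.inl ⟨∅, ?_, by simp⟩⟩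
    simp; omega
  | succ n ih =>
    intro i j hij
    match i, j with
    | 0, j => exact ⟨0, fun V _ A _ _ => Or.inl ⟨∅, by simp, by simp⟩⟩
    | i+1, 0 => exact ⟨0, fun V _ A _ _ => Or.inr ⟨∅, by simp, by simp⟩⟩
    | i+1, j+1 =>
      obtain ⟨N1, h1⟩ := ih i (j+1) (by omega)
      obtain ⟨N2, h2⟩ := ih (i+1) j (by omega)
      refine ⟨N1 + N2 + 1, ?_⟩
      intro V _ A hA hcard
      classical
      obtain ⟨v⟩ : Nonempty V := Fintype.card_pos_iff.mp (by omega)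
      set s1 : Finset V := univ.filter (fun x => x ≠ v ∧ A v x) with hs1
      set s2 : Finset V := univ.filter (fun x => x ≠ v ∧ ¬ A v x) with hs2
      have hsub : (univ : Finset V) ⊆ insert v (s1 ∪ s2) := by
        intro x _
        by_cases hxv : x = v
        · simp [hxv]
        · by_cases hvx : A v x
          · exact Finset.mem_insert_of_mem (Finset.mem_union_left _ (by simp [hs1, hxv, hvx]))
          · exact Finset.mem_insert_of_mem (Finset.mem_union_right _ (by simp [hs2, hxv, hvx]))
      have hsum : Fintype.card V ≤ s1.card + s2.card + 1 := by
        calc Fintype.card V = (univ : Finset V).card := (Finset.card_univ).symm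
          _ ≤ (insert v (s1 ∪ s2)).card := Finset.card_le_card hsub
          _ ≤ (s1 ∪ s2).card + 1 := Finset.card_insert_le _ _
          _ ≤ s1.card + s2.card + 1 := by
              have := Finset.card_union_le s1 s2; omega
      rcases (by omega : N1 ≤ s1.card ∨ N2 ≤ s2.card) with hc | hc
      · have := h1 ↥s1 (fun a b => A a.1 b.1) (fun a b hab => hA hab)
          (by rw [Fintype.card_coe]; exact hc)
        rcases this with hr | hb
        · obtain ⟨t, hts, htk, ht⟩ := burr_cliqueOn_lift A s1 i hr
          have hvt : v ∉ t := by
            intro hv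
            have := hts hv
            rw [hs1, Finset.mem_filter] at this
            exact this.2.1 rfl
          refine Or.inl ⟨insert v t, ?_, ?_⟩
          · rw [Finset.card_insert_of_notMem hvt]; omega
          · intro a ha b hb hab
            have hAdj : ∀ x ∈ t, A v x := by
              intro x hx
              have := hts hx
              rw [hs1, Finset.mem_filter] at this
              exact this.2.2
            rcases Finset.mem_insert.mp ha with rfl | ha' <;>
              rcases Finset.mem_insert.mp hb with rfl | hb'
            · exact absurd rfl hab
            · exact hAdj b hb'
            · exact hA (hAdj a ha')
            · exact ht a ha' b hb' hab
        · obtain ⟨t, _, htk, ht⟩ := burr_cliqueOn_lift (fun a b => ¬ A a b) s1 (j+1) hb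
          exact Or.inr ⟨t, htk, ht⟩
      · have := h2 ↥s2 (fun a b => A a.1 b.1) (fun a b hab => hA hab)
          (by rw [Fintype.card_coe]; exact hc)
        rcases this with hr | hb
        · obtain ⟨t, _, htk, ht⟩ := burr_cliqueOn_lift A s2 (i+1) hr
          exact Or.inl ⟨t, htk, ht⟩
        · obtain ⟨t, hts, htk, ht⟩ := burr_cliqueOn_lift (fun a b => ¬ A a b) s2 j hb
          have hvt : v ∉ t := by
            intro hv
            have := hts hv
            rw [hs2, Finset.mem_filter] at this
            exact this.2.1 rfl
          refine Or.inr ⟨insert v t, ?_, ?_⟩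
          · rw [Finset.card_insert_of_notMem hvt]; omega
          · intro a ha b hb hab
            have hAdj : ∀ x ∈ t, ¬ A v x := by
              intro x hx
              have := hts hx
              rw [hs2, Finset.mem_filter] at this
              exact this.2.2
            rcases Finset.mem_insert.mp ha with rfl | ha' <;>
              rcases Finset.mem_insert.mp hb with rfl | hb'
            · exact absurd rfl hab
            · exact hAdj b hb'
            · exact fun hab2 => hAdj a ha' (hA hab2)
            · exact ht a ha' b hb' hab

lemma burr_isRamsey_exists {α β : Type*} [Fintype α] [Fintype β]
    (F : SimpleGraph α) (G : SimpleGraph β) : ∃ N, IsRamsey F G N := by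
  obtain ⟨N, hN⟩ := burr_ramsey_aux (Fintype.card α + Fintype.card β)
    (Fintype.card α) (Fintype.card β) le_rfl
  refine ⟨N, fun R => ?_⟩
  rcases hN (Fin N) R.Adj (fun _ _ hab => hab.symm) (by simp) with ⟨s, hcard, hs⟩ | ⟨s, hcard, hs⟩
  · obtain ⟨e, he⟩ := Function.Embedding.exists_of_card_le_finset hcard
    refine Or.inl ⟨e, e.injective, fun a b hab => ?_⟩
    exact hs _ (he (Set.mem_range_self a)) _ (he (Set.mem_range_self b))
      (fun h => hab.ne (e.injective h))
  · obtain ⟨e, he⟩ := Function.Embedding.exists_of_card_le_finset hcard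
    refine Or.inr ⟨e, e.injective, fun a b hab => ?_⟩
    rw [SimpleGraph.compl_adj]
    exact ⟨fun h => hab.ne (e.injective h),
      hs _ (he (Set.mem_range_self a)) _ (he (Set.mem_range_self b))
        (fun h => hab.ne (e.injective h))⟩

theorem burr_lower_bound {α β : Type*} [Fintype α] [Fintype β]
    (F : SimpleGraph α) (G : SimpleGraph β)
    (hF : F.Connected) (h : sigmaG G ≤ Fintype.card α) :
    (chromNum G - 1) * (Fintype.card α - 1) + sigmaG G ≤ ramseyNumber F G := by
  classical
  by_cases hβ : Nonempty β
  case neg =>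
    -- degenerate: β empty, chromNum = 0, sigmaG = 0
    have hE : IsEmpty β := not_nonempty_iff.mp hβ
    have hχ0 : chromNum G = 0 :=
      Nat.eq_zero_of_le_zero (Nat.sInf_le ⟨Coloring.mk (fun v => (hE.elim v))
        (fun {u w} _ => (hE.elim u))⟩)
    have hσ0 : sigmaG G = 0 := by
      rw [sigmaG]
      convert Nat.sInf_empty using 2
      ext m
      simp only [Set.mem_setOf_eq, Set.mem_empty_iff_false, iff_false]
      rintro ⟨C, i, -⟩
      have := i.isLt
      omega
    rw [hχ0, hσ0]
    simp
  case pos =>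
    obtain ⟨v0⟩ := hβ
    have hcolset : {k | G.Colorable k}.Nonempty := ⟨_, G.colorable_of_fintype⟩
    have hχmem : G.Colorable (chromNum G) := Nat.sInf_mem hcolset
    have hχpos : 1 ≤ chromNum G := by
      by_contra h0
      have : chromNum G = 0 := by omega
      rw [this] at hχmem
      obtain ⟨C⟩ := hχmem
      exact (C v0).elim0
    obtain ⟨C0⟩ := hχmem
    -- sigma ≥ 1
    have hσpos : 1 ≤ sigmaG G := by
      by_contra h0
      have hσ0 : sigmaG G = 0 := by omega
      have hmem0 : (0:ℕ) ∈ {m | ∃ C : G.Coloring (Fin (chromNum G)), ∃ i,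
          (Finset.univ.filter (fun v => C v = i)).card = m} := by
        rcases Nat.sInf_eq_zero.mp hσ0 with h0' | hemp
        · exact h0'
        · exact absurd hemp (Set.nonempty_iff_ne_empty.mp ⟨_, C0, ⟨0, hχpos⟩, rfl⟩)
      obtain ⟨C, i, hCi⟩ := hmem0
      have hnei : ∀ v, C v ≠ i := by
        intro v hv
        have hmem : v ∈ Finset.univ.filter (fun v => C v = i) :=
          Finset.mem_filter.mpr ⟨Finset.mem_univ v, hv⟩
        rw [Finset.card_eq_zero] at hCi
        simp [hCi] at hmem
      have hcol' : G.Colorable (chromNum G - 1) := by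
        refine ⟨Coloring.mk (fun v =>
          ⟨if (C v : ℕ) < (i : ℕ) then (C v : ℕ) else (C v : ℕ) - 1, ?_⟩) ?_⟩
        · have h1 := (C v).isLt
          have h2 := i.isLt
          have h3 : (C v : ℕ) ≠ (i : ℕ) := fun he => hnei v (Fin.ext he)
          split_ifs <;> omega
        · intro u w hadj heq
          have hCne : (C u : ℕ) ≠ (C w : ℕ) := fun he => C.valid hadj (Fin.ext he)
          have hu : (C u : ℕ) ≠ (i : ℕ) := fun he => hnei u (Fin.ext he)
          have hw : (C w : ℕ) ≠ (i : ℕ) := fun he => hnei w (Fin.ext he)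
          have h1 := (C u).isLt
          have h2 := (C w).isLt
          have h3 := i.isLt
          simp only [Fin.mk.injEq] at heq
          split_ifs at heq <;> omega
      have : chromNum G ≤ chromNum G - 1 := Nat.sInf_le hcol'
      omega
    have hap : 1 ≤ Fintype.card α := le_trans hσpos h
    -- main argument
    refine le_csInf (burr_isRamsey_exists F G) ?_
    intro m hm
    by_contra hlt
    push_neg at hlt
    rcases Nat.eq_zero_or_pos m with hm0 | hmpos
    · subst hm0
      rcases hm ⊥ with ⟨f, -, -⟩ | ⟨g, -, -⟩
      · obtain ⟨u0⟩ := hF.nonempty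
        exact (f u0).elim0
      · exact (g v0).elim0
    have hd : 1 ≤ Fintype.card α - 1 := by
      by_contra hd0
      have ha1 : Fintype.card α = 1 := by omega
      rw [ha1] at hlt
      simp at hlt
      omega
    -- the coloring
    set bb : Fin m → ℕ := fun v => min ((v : ℕ) / (Fintype.card α - 1)) (chromNum G - 1)
      with hbb
    have hbv : ∀ (v : Fin m) (k : ℕ), bb v = k →
        k * (Fintype.card α - 1) ≤ (v : ℕ) ∧
        (v : ℕ) < k * (Fintype.card α - 1) + (Fintype.card α - 1) := by
      intro v k hk
      simp only [hbb] at hk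
      have hmin1 : k ≤ (v : ℕ) / (Fintype.card α - 1) := by
        rw [← hk]; exact min_le_left _ _
      have h1 : k * (Fintype.card α - 1) ≤ (v : ℕ) :=
        (Nat.le_div_iff_mul_le hd).mp hmin1
      refine ⟨h1, ?_⟩
      rcases le_or_gt ((v : ℕ) / (Fintype.card α - 1)) (chromNum G - 1) with hle | hgt
      · have heq : (v : ℕ) / (Fintype.card α - 1) = k := by
          rw [min_eq_left hle] at hk; exact hk
        have h2 : (v : ℕ) / (Fintype.card α - 1) < k + 1 := by omega
        have h3 := (Nat.div_lt_iff_lt_mul hd).mp h2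
        rw [Nat.succ_mul] at h3
        exact h3
      · have hk2 : chromNum G - 1 = k := by
          rw [min_eq_right (le_of_lt hgt)] at hk; exact hk
        subst hk2
        have h3 : (v : ℕ) < m := v.isLt
        omega
    have card_le : ∀ (k L c : ℕ),
        (∀ v : Fin m, bb v = k → L ≤ (v : ℕ) ∧ (v : ℕ) < L + c) →
        (univ.filter (fun v : Fin m => bb v = k)).card ≤ c := by
      intro k L c hb
      calc (univ.filter (fun v : Fin m => bb v = k)).card
          ≤ (Finset.range c).card := by
            apply Finset.card_le_card_of_injOn (fun v : Fin m => (v : ℕ) - L)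
            · intro v hv
              have := hb v (Finset.mem_filter.mp hv).2
              simp only [Finset.coe_range, Set.mem_Iio]
              omega
            · intro u hu v hv huv
              have huv' : (u : ℕ) - L = (v : ℕ) - L := huv
              have h1 := hb u (Finset.mem_filter.mp (Finset.mem_coe.mp hu)).2
              have h2 := hb v (Finset.mem_filter.mp (Finset.mem_coe.mp hv)).2
              exact Fin.ext (by omega)
        _ = c := Finset.card_range c
    set R : SimpleGraph (Fin m) :=
      { Adj := fun u v => u ≠ v ∧ bb u = bb v
        symm := ⟨fun u v hv => ⟨hv.1.symm, hv.2.symm⟩⟩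
        loopless := ⟨fun v hv => hv.1 rfl⟩ } with hR
    rcases hm R with ⟨f, hfinj, hfadj⟩ | ⟨g, hginj, hgadj⟩
    · -- no red F
      obtain ⟨u0⟩ := hF.nonempty
      have key : ∀ {x y : α} (_ : F.Walk x y), bb (f x) = bb (f y) := by
        intro x y p
        induction p with
        | nil => rfl
        | cons hadj q ih => exact ((hfadj _ _ hadj).2).trans ih
      have hconst : ∀ u : α, bb (f u) = bb (f u0) := by
        intro u
        obtain ⟨p⟩ := hF.preconnected u u0
        exact key p
      have hsub : univ.map ⟨f, hfinj⟩ ⊆ univ.filter (fun v : Fin m => bb v = bb (f u0)) := by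
        intro x hx
        obtain ⟨u, -, rfl⟩ := Finset.mem_map.mp hx
        exact Finset.mem_filter.mpr ⟨Finset.mem_univ _, hconst u⟩
      have h1 : Fintype.card α ≤ (univ.filter (fun v : Fin m => bb v = bb (f u0))).card := by
        have := Finset.card_le_card hsub
        rwa [Finset.card_map, Finset.card_univ] at this
      have h2 := card_le (bb (f u0)) (bb (f u0) * (Fintype.card α - 1)) (Fintype.card α - 1)
        (fun v hv => hbv v _ hv)
      omega
    · -- no blue G
      have hbblt : ∀ v : Fin m, bb v < chromNum G := by
        intro v
        have h5 : bb v ≤ chromNum G - 1 :=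
          min_le_right ((v : ℕ) / (Fintype.card α - 1)) (chromNum G - 1)
        omega
      set C : G.Coloring (Fin (chromNum G)) := Coloring.mk (fun x => ⟨bb (g x), hbblt _⟩)
        (by
          intro x y hxy
          have h2 := hgadj x y hxy
          rw [SimpleGraph.compl_adj] at h2
          obtain ⟨hne', hnadj⟩ := h2
          have hbne : bb (g x) ≠ bb (g y) := fun heq => hnadj ⟨hne', heq⟩
          exact fun hC => hbne (congrArg Fin.val hC)) with hC
      set i0 : Fin (chromNum G) := ⟨chromNum G - 1, by omega⟩ with hi0
      have hσle : sigmaG G ≤ (univ.filter (fun v => C v = i0)).card :=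
        Nat.sInf_le ⟨C, i0, rfl⟩
      have hmapsto : ∀ x ∈ univ.filter (fun v => C v = i0),
          g x ∈ univ.filter (fun v : Fin m => bb v = chromNum G - 1) := by
        intro x hx
        have hx2 := (Finset.mem_filter.mp hx).2
        have : bb (g x) = chromNum G - 1 := congrArg Fin.val hx2
        exact Finset.mem_filter.mpr ⟨Finset.mem_univ _, this⟩
      have h3 : (univ.filter (fun v => C v = i0)).card ≤
          (univ.filter (fun v : Fin m => bb v = chromNum G - 1)).card :=
        Finset.card_le_card_of_injOn g hmapsto (hginj.injOn)
      have h4 := card_le (chromNum G - 1) ((chromNum G - 1) * (Fintype.card α - 1))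
        (sigmaG G - 1) (fun v hv => ⟨(hbv v _ hv).1, by
          have := v.isLt
          omega⟩)
      omega
end

section
/- Let R be a graph, C a longest cycle in R of length c, and let w₁,…,w_Δ be vertices of R not on C, all lying in a common component of R − V(C) (in particular, pairwise connected outside C). Then the number of vertices of C that are non-neighbors (in R) of every w_j is at least (c − Δ²)/2. -/
open SimpleGraph Finset

lemma my_getVert_mem_support {V : Type*} {G : SimpleGraph V} {u v : V}
    (p : G.Walk u v) (n : ℕ) : p.getVert n ∈ p.support := by
  induction p generalizing n with
  | nil => simp [SimpleGraph.Walk.getVert]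
  | cons h q ih =>
    cases n with
    | zero => simp [SimpleGraph.Walk.getVert]
    | succ n => simp only [SimpleGraph.Walk.getVert_cons_succ, SimpleGraph.Walk.support_cons,
        List.mem_cons]; exact Or.inr (ih n)

lemma my_getVert_inj {V : Type*} {G : SimpleGraph V} {u v : V}
    (p : G.Walk u v) (hp : p.IsPath) : ∀ a ≤ p.length, ∀ b ≤ p.length,
      p.getVert a = p.getVert b → a = b := by
  induction p with
  | nil => intro a ha b hb _; simp at ha hb; omega
  | cons h q ih =>
    rw [SimpleGraph.Walk.cons_isPath_iff] at hp
    intro a ha b hb hab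
    cases a with
    | zero =>
      cases b with
      | zero => rfl
      | succ b =>
        exfalso
        rw [SimpleGraph.Walk.getVert_zero, SimpleGraph.Walk.getVert_cons_succ] at hab
        exact hp.2 (hab ▸ my_getVert_mem_support q b)
    | succ a =>
      cases b with
      | zero =>
        exfalso
        rw [SimpleGraph.Walk.getVert_zero, SimpleGraph.Walk.getVert_cons_succ] at hab
        exact hp.2 (hab ▸ my_getVert_mem_support q a)
      | succ b =>
        simp only [SimpleGraph.Walk.getVert_cons_succ] at hab
        simp only [SimpleGraph.Walk.length_cons] at ha hb
        exact congrArg Nat.succ (ih hp.1 a (by omega) b (by omega) hab)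

lemma key_lemma {V : Type*} (R : SimpleGraph V) (m : ℕ) [NeZero m] (f : ZMod m → V)
    (h : LongestCycle R m f) {u v : V}
    (p : R.Walk u v) (hp : ∀ x ∈ p.support, x ∉ Set.range f)
    (i : ZMod m) (hadj : R.Adj u (f i)) (hadj' : R.Adj v (f (i + 1))) : False := by
  classical
  have hm3 : 3 ≤ m := h.1.1
  set q : R.Walk u v := (p.toPath : R.Walk u v) with hqdef
  have hq : q.IsPath := p.toPath.2
  have hqsupp : ∀ x ∈ q.support, x ∉ Set.range f := fun x hx =>
    hp x (SimpleGraph.Walk.support_toPath_subset p hx)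
  set N := m + q.length + 1 with hN
  haveI : NeZero N := ⟨by omega⟩
  set g : ZMod N → V := fun t =>
    if t.val < m then f (i + 1 + (t.val : ZMod m)) else q.getVert (t.val - m) with hg
  have hgf : ∀ t : ZMod N, t.val < m → g t = f (i + 1 + (t.val : ZMod m)) := by
    intro t ht; simp only [hg, if_pos ht]
  have hgq : ∀ t : ZMod N, ¬ t.val < m → g t = q.getVert (t.val - m) := by
    intro t ht; simp only [hg, if_neg ht]
  -- injectivity
  have hinj : Function.Injective g := by
    intro a b hab
    have ha := ZMod.val_lt a
    have hb := ZMod.val_lt b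
    have hvaleq : a.val = b.val := by
      by_cases h1 : a.val < m <;> by_cases h2 : b.val < m
      · rw [hgf a h1, hgf b h2] at hab
        have := add_left_cancel (h.1.2.1 hab)
        have : a.val = ((a.val : ZMod m)).val := (ZMod.val_cast_of_lt h1).symm
        rw [this, add_left_cancel (h.1.2.1 hab), ZMod.val_cast_of_lt h2]
      · rw [hgf a h1, hgq b h2] at hab
        exact absurd ⟨_, hab⟩
          (hqsupp _ (my_getVert_mem_support q (b.val - m)))
      · rw [hgq a h1, hgf b h2] at hab
        exact absurd ⟨_, hab.symm⟩
          (hqsupp _ (my_getVert_mem_support q (a.val - m)))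
      · rw [hgq a h1, hgq b h2] at hab
        have := my_getVert_inj q hq (a.val - m) (by omega) (b.val - m) (by omega) hab
        omega
    exact ZMod.val_injective N hvaleq
  -- adjacency
  have hadjall : ∀ t : ZMod N, R.Adj (g t) (g (t + 1)) := by
    intro t
    have ht : t.val < N := ZMod.val_lt t
    haveI : Fact (1 < N) := ⟨by omega⟩
    have hone : (1 : ZMod N).val = 1 := ZMod.val_one N
    have htt : (t + 1).val = (t.val + 1) % N := by rw [ZMod.val_add, hone]
    by_cases hc1 : t.val + 1 < N
    · have htt' : (t + 1).val = t.val + 1 := by rw [htt, Nat.mod_eq_of_lt hc1]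
      by_cases hc2 : t.val + 1 < m
      · rw [hgf t (by omega), hgf (t + 1) (by omega), htt']
        have hcast : ((t.val + 1 : ℕ) : ZMod m) = (t.val : ZMod m) + 1 := by push_cast; ring
        rw [hcast, ← add_assoc]
        exact h.1.2.2 (i + 1 + (t.val : ZMod m))
      · by_cases hc3 : t.val + 1 = m
        · rw [hgf t (by omega), hgq (t + 1) (by omega 
            : ¬ (t + 1).val < m)]
          have e1 : ((t.val : ℕ) : ZMod m) = -1 := by
            have : t.val = m - 1 := by omega
            rw [this, Nat.cast_sub (by omega), ZMod.natCast_self, Nat.cast_one]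
            ring
          have e2 : (t + 1).val - m = 0 := by omega
          rw [e1, e2, SimpleGraph.Walk.getVert_zero]
          have : i + 1 + -1 = i := by ring
          rw [this]
          exact hadj.symm
        · -- m ≤ t.val
          rw [hgq t (by omega), hgq (t + 1) (by omega : ¬ (t + 1).val < m)]
          have e : (t + 1).val - m = (t.val - m) + 1 := by omega
          rw [e]
          exact SimpleGraph.Walk.adj_getVert_succ q (by omega)
    · -- t.val + 1 = N
      have hc1' : t.val + 1 = N := by omega
      have htt' : (t + 1).val = 0 := by rw [htt, hc1', Nat.mod_self]
      rw [hgq t (by omega), hgf (t + 1) (by omega)]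
      have e : t.val - m = q.length := by omega
      rw [e, SimpleGraph.Walk.getVert_length, htt']
      simpa using hadj'
  have := h.2 N g ⟨by omega, hinj, hadjall⟩
  omega

theorem common_nonneighbors_on_cycle {V : Type*} (R : SimpleGraph V)
    [DecidableRel R.Adj] (m : ℕ) [NeZero m] (f : ZMod m → V)
    (h : LongestCycle R m f) (Δ : ℕ) (hΔ : 1 ≤ Δ)
    (w : Fin Δ → V) (hw : ∀ j, w j ∉ Set.range f)
    (hconn : ∀ j j', ∃ p : R.Walk (w j) (w j'), ∀ x ∈ p.support, x ∉ Set.range f) :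
    ((m : ℝ) - (Δ : ℝ) ^ 2) / 2
      ≤ ((Finset.univ.filter fun i : ZMod m => ∀ j, ¬ R.Adj (w j) (f i)).card : ℝ) := by
  classical
  set S := Finset.univ.filter fun i : ZMod m => ∀ j, ¬ R.Adj (w j) (f i) with hS
  have key : ∀ (i : ZMod m), (∃ j, R.Adj (w j) (f i)) → (i + 1) ∈ S := by
    rintro i ⟨j, hj⟩
    simp only [hS, Finset.mem_filter, Finset.mem_univ, true_and]
    intro j' hadj'
    obtain ⟨p, hp⟩ := hconn j j'
    exact key_lemma R m f h p hp i hj hadj'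
  have hA : (Finset.univ.filter fun i : ZMod m => ∃ j, R.Adj (w j) (f i)).card ≤ S.card := by
    apply Finset.card_le_card_of_injOn (fun i => i + 1)
    · intro i hi
      simp only [Finset.mem_coe, Finset.mem_filter, Finset.mem_univ, true_and] at hi
      exact key i hi
    · intro a _ b _ hab; exact add_right_cancel hab
  have hAc : (Finset.univ.filter fun i : ZMod m => ∃ j, R.Adj (w j) (f i)) = Sᶜ := by
    ext i; simp [hS, not_forall]
  have hcard : Sᶜ.card = m - S.card := by
    rw [Finset.card_compl, ZMod.card]
  have hle : S.card ≤ m := by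
    calc S.card ≤ Finset.univ.card := Finset.card_le_univ S
    _ = m := by rw [Finset.card_univ, ZMod.card]
  rw [hAc, hcard] at hA
  have h2 : m ≤ 2 * S.card := by omega
  have h3 : (m : ℝ) ≤ 2 * S.card := by exact_mod_cast h2
  have h4 : (0:ℝ) ≤ (Δ:ℝ)^2 := by positivity
  linarith
end

section
/- Let C and C' be two vertex-disjoint cycles in a graph R with |C| ≥ |C'|, such that C is a longest cycle in R. Let S be a set of consecutive vertices of C and T a set of consecutive vertices of C' with |S|, |T| ≤ ⌈|C'|/2⌉. Then there do not exist two vertex-disjoint edges of R between S and T. -/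
open SimpleGraph Finset

lemma core2 {V : Type*} (R : SimpleGraph V) (m m' : ℕ) (f : ZMod m → V) (g : ZMod m' → V)
    (hf : LongestCycle R m f) (hg : CycleIn R m' g) (hmm : m' ≤ m)
    (hdisj : ∀ i j, f i ≠ g j)
    (a : ZMod m) (b : ZMod m') (s t : ℕ)
    (hs : s ≤ (m' + 1) / 2) (ht : t ≤ (m' + 1) / 2)
    (i₁ i₂ j₁ j₂ : ℕ) (hi12 : i₁ < i₂) (hi₂ : i₂ < s)
    (ε : ZMod m') (hε : ε = 1 ∨ ε = -1)
    (e : ℕ) (he1 : 1 ≤ e) (he2 : e < t)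
    (hend : (b + (j₂ : ZMod m')) = b + (j₁ : ZMod m') + ε * ((m' - e : ℕ) : ZMod m'))
    (E1 : R.Adj (f (a + (i₁ : ZMod m))) (g (b + (j₁ : ZMod m'))))
    (E2 : R.Adj (f (a + (i₂ : ZMod m))) (g (b + (j₂ : ZMod m')))) : False := by
  obtain ⟨⟨hm3, hfinj, hfadj⟩, hmax⟩ := hf
  obtain ⟨hm'3, hginj, hgadj⟩ := hg
  set d := i₂ - i₁ with hd_def
  set p := m - d with hp_def
  set q := m' - e with hq_def
  set M := p + q + 2 with hM_def
  have hd1 : 1 ≤ d := by omega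
  have hdm' : d < m' := by omega
  have hem' : e < m' := by omega
  have hpm : p < m := by omega
  have hqm' : q < m' := by omega
  have hMm : m + 3 ≤ M := by omega
  haveI : NeZero M := ⟨by omega⟩
  haveI : NeZero m := ⟨by omega⟩
  haveI : NeZero m' := ⟨by omega⟩
  set h : ZMod M → V := fun k =>
    if k.val ≤ p then f (a + (i₂ : ZMod m) + (k.val : ZMod m))
    else g (b + (j₁ : ZMod m') + ε * ((k.val - (p + 1) : ℕ) : ZMod m')) with hh_def
  have hdef : ∀ k : ZMod M, h k =
      if k.val ≤ p then f (a + (i₂ : ZMod m) + (k.val : ZMod m))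
      else g (b + (j₁ : ZMod m') + ε * ((k.val - (p + 1) : ℕ) : ZMod m')) := fun k => rfl
  haveI : Fact (1 < m') := ⟨by omega⟩
  have hinj : Function.Injective h := by
    intro x y hxy
    have hx := ZMod.val_lt x
    have hy := ZMod.val_lt y
    rw [hdef, hdef] at hxy
    by_cases hxp : x.val ≤ p <;> by_cases hyp : y.val ≤ p
    · rw [if_pos hxp, if_pos hyp] at hxy
      have h1 := add_left_cancel (hfinj hxy)
      have h2 := congrArg ZMod.val h1
      rw [ZMod.val_cast_of_lt (by omega), ZMod.val_cast_of_lt (by omega)] at h2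
      exact ZMod.val_injective M h2
    · rw [if_pos hxp, if_neg hyp] at hxy
      exact absurd hxy (hdisj _ _)
    · rw [if_neg hxp, if_pos hyp] at hxy
      exact absurd hxy.symm (hdisj _ _)
    · rw [if_neg hxp, if_neg hyp] at hxy
      have h0 := add_left_cancel (hginj hxy)
      have h1 : ((x.val - (p + 1) : ℕ) : ZMod m') = ((y.val - (p + 1) : ℕ) : ZMod m') := by
        rcases hε with rfl | rfl
        · simpa using h0
        · simpa using h0
      have h2 := congrArg ZMod.val h1
      rw [ZMod.val_cast_of_lt (by omega), ZMod.val_cast_of_lt (by omega)] at h2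
      exact ZMod.val_injective M (by omega)
  have hadj : ∀ i : ZMod M, R.Adj (h i) (h (i + 1)) := by
    intro i
    have hk := ZMod.val_lt i
    have hsucc : (i + 1).val = (i.val + 1) % M := by
      conv_lhs => rw [← ZMod.natCast_zmod_val i, ← Nat.cast_one, ← Nat.cast_add]
      rw [ZMod.val_natCast]
    rcases lt_trichotomy i.val p with hc | hc | hc
    · have h1 : (i + 1).val = i.val + 1 := by rw [hsucc, Nat.mod_eq_of_lt (by omega)]
      rw [hdef, hdef, if_pos (le_of_lt hc), h1, if_pos (by omega)]
      have harg : ((i.val + 1 : ℕ) : ZMod m) = (i.val : ZMod m) + 1 := by push_cast; ring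
      rw [harg, ← add_assoc]
      exact hfadj _
    · have h1 : (i + 1).val = p + 1 := by rw [hsucc, Nat.mod_eq_of_lt (by omega)]; omega
      rw [hdef, hdef, if_pos (le_of_eq hc), h1, if_neg (by omega), Nat.sub_self]
      have harg : a + (i₂ : ZMod m) + ((i.val : ℕ) : ZMod m) = a + (i₁ : ZMod m) := by
        rw [hc, hp_def, Nat.cast_sub (by omega), ZMod.natCast_self, zero_sub,
          hd_def, Nat.cast_sub (le_of_lt hi12)]
        ring
      rw [harg]
      simpa using E1
    · rcases Nat.lt_or_ge i.val (M - 1) with hc2 | hc2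
      · have h1 : (i + 1).val = i.val + 1 := by rw [hsucc, Nat.mod_eq_of_lt (by omega)]
        rw [hdef, hdef, if_neg (by omega), h1, if_neg (by omega)]
        have h2 : i.val + 1 - (p + 1) = (i.val - (p + 1)) + 1 := by omega
        rw [h2]
        set l := i.val - (p + 1) with hl_def
        rcases hε with rfl | rfl
        · have harg : b + (j₁ : ZMod m') + 1 * (((l + 1 : ℕ)) : ZMod m') =
              b + (j₁ : ZMod m') + 1 * ((l : ℕ) : ZMod m') + 1 := by push_cast; ring
          rw [harg]
          exact hgadj _
        · have harg1 : b + (j₁ : ZMod m') + (-1) * ((l : ℕ) : ZMod m') =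
              (b + (j₁ : ZMod m') + (-1) * (((l + 1 : ℕ)) : ZMod m')) + 1 := by
            push_cast; ring
          rw [harg1]
          exact (hgadj _).symm
      · have hval : i.val = p + q + 1 := by omega
        have h1 : (i + 1).val = 0 := by
          rw [hsucc]
          have : i.val + 1 = M := by omega
          rw [this, Nat.mod_self]
        rw [hdef, hdef, if_neg (by omega), h1, if_pos (by omega)]
        have harg : b + (j₁ : ZMod m') + ε * ((i.val - (p + 1) : ℕ) : ZMod m') =
            b + (j₂ : ZMod m') := by
          rw [hval]
          have hq2 : p + q + 1 - (p + 1) = q := by omega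
          rw [hq2, hend]
        rw [harg]
        have harg2 : a + (i₂ : ZMod m) + ((0 : ℕ) : ZMod m) = a + (i₂ : ZMod m) := by
          push_cast; ring
        rw [harg2]
        exact E2.symm
  have := hmax M h ⟨by omega, hinj, hadj⟩
  omega

lemma core {V : Type*} (R : SimpleGraph V) (m m' : ℕ) (f : ZMod m → V) (g : ZMod m' → V)
    (hf : LongestCycle R m f) (hg : CycleIn R m' g) (hmm : m' ≤ m)
    (hdisj : ∀ i j, f i ≠ g j)
    (a : ZMod m) (b : ZMod m') (s t : ℕ)
    (hs : s ≤ (m' + 1) / 2) (ht : t ≤ (m' + 1) / 2)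
    (i₁ i₂ j₁ j₂ : ℕ) (hi12 : i₁ < i₂) (hi₂ : i₂ < s)
    (hj₁ : j₁ < t) (hj₂ : j₂ < t) (hjne : j₁ ≠ j₂)
    (E1 : R.Adj (f (a + (i₁ : ZMod m))) (g (b + (j₁ : ZMod m'))))
    (E2 : R.Adj (f (a + (i₂ : ZMod m))) (g (b + (j₂ : ZMod m')))) : False := by
  have hm'3 : 3 ≤ m' := hg.1
  rcases Nat.lt_or_ge j₁ j₂ with hj | hj
  · refine core2 R m m' f g hf hg hmm hdisj a b s t hs ht i₁ i₂ j₁ j₂ hi12 hi₂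
      (-1) (Or.inr rfl) (j₂ - j₁) (by omega) (by omega) ?_ E1 E2
    rw [Nat.cast_sub (by omega : j₂ - j₁ ≤ m'), Nat.cast_sub (le_of_lt hj),
      ZMod.natCast_self]
    ring
  · refine core2 R m m' f g hf hg hmm hdisj a b s t hs ht i₁ i₂ j₁ j₂ hi12 hi₂
      1 (Or.inl rfl) (j₁ - j₂) (by omega) (by omega) ?_ E1 E2
    rw [Nat.cast_sub (by omega : j₁ - j₂ ≤ m'), Nat.cast_sub (by omega : j₂ ≤ j₁),
      ZMod.natCast_self]
    ring

theorem no_two_independent_edges_between_segments {V : Type*} (R : SimpleGraph V)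
    (m m' : ℕ) (f : ZMod m → V) (g : ZMod m' → V)
    (hf : LongestCycle R m f) (hg : CycleIn R m' g) (hmm : m' ≤ m)
    (hdisj : ∀ i j, f i ≠ g j)
    (a : ZMod m) (b : ZMod m') (s t : ℕ)
    (hs : s ≤ (m' + 1) / 2) (ht : t ≤ (m' + 1) / 2) :
    ¬ ∃ (i₁ i₂ j₁ j₂ : ℕ), i₁ < s ∧ i₂ < s ∧ j₁ < t ∧ j₂ < t ∧
        R.Adj (f (a + (i₁ : ZMod m))) (g (b + (j₁ : ZMod m'))) ∧
        R.Adj (f (a + (i₂ : ZMod m))) (g (b + (j₂ : ZMod m'))) ∧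
        f (a + (i₁ : ZMod m)) ≠ f (a + (i₂ : ZMod m)) ∧
        g (b + (j₁ : ZMod m')) ≠ g (b + (j₂ : ZMod m')) := by
  rintro ⟨i₁, i₂, j₁, j₂, hi₁, hi₂, hj₁, hj₂, E1, E2, hfne, hgne⟩
  have hine : i₁ ≠ i₂ := by rintro rfl; exact hfne rfl
  have hjne : j₁ ≠ j₂ := by rintro rfl; exact hgne rfl
  rcases Nat.lt_or_ge i₁ i₂ with hi | hi
  · exact core R m m' f g hf hg hmm hdisj a b s t hs ht i₁ i₂ j₁ j₂ hi hi₂ hj₁ hj₂ hjne E1 E2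
  · exact core R m m' f g hf hg hmm hdisj a b s t hs ht i₂ i₁ j₂ j₁ (by omega) hi₁ hj₂ hj₁
      hjne.symm E2 E1
end
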